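/- In the field of rational functions $\mathbb{Q}(y_1,\ldots,y_n,t)$, the symmetrization identity $\sum_{w \in S_n} w\bigl(\prod_{i<j} \frac{y_i - t y_j}{y_i - y_j}\bigr) = v_n(t)$ holds, where $v_n(t) = \prod_{i=1}^{n} \frac{1-t^i}{1-t}$ and $w$ acts by permuting the variables $y_1,\ldots,y_n$. -/
import Mathlib


open Finset

open Polynomial

variable {K : Type*} [Field K]

private lemma keyA (m : ℕ) (t : K) (ht : t ≠ 1) (y : Fin m → K)
    (hy : Function.Injective y) (hy0 : ∀ i, y i ≠ 0) :
    ∑ k, ∏ j ∈ univ.erase k, (y k - t * y j) / (y k - y j) = ∑ j ∈ range m, t ^ j := by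
  classical
  set P : K[X] := Lagrange.nodal univ (fun j => t * y j) - Lagrange.nodal univ y with hP
  have hdeg : P.degree < (#(univ : Finset (Fin m)) : WithBot ℕ) := by
    have h1 : (Lagrange.nodal univ (fun j : Fin m => t * y j)).degree = #(univ : Finset (Fin m)) :=
      Lagrange.degree_nodal
    have h2 : (Lagrange.nodal univ y).degree = #(univ : Finset (Fin m)) := Lagrange.degree_nodal
    rw [hP, ← h1]
    exact degree_sub_lt (h1.trans h2.symm) Lagrange.nodal_ne_zero
      (Lagrange.nodal_monic.leadingCoeff.trans Lagrange.nodal_monic.leadingCoeff.symm)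
  have key := Lagrange.eq_interpolate (v := y) (s := univ) hy.injOn hdeg
  have E := congrArg (Polynomial.eval 0) key
  simp only [hP, Lagrange.interpolate_apply, Lagrange.basis, Lagrange.basisDivisor,
    eval_sub, Lagrange.eval_nodal, eval_finset_sum, eval_mul, eval_prod, eval_C, eval_X,
    zero_sub] at E
  set Q : K := ∏ x : Fin m, -y x with hQdef
  have hQ : Q ≠ 0 := prod_ne_zero_iff.2 fun i _ => neg_ne_zero.2 (hy0 i)
  have hL : (∏ x : Fin m, -(t * y x)) = t ^ m * Q := by
    rw [hQdef]
    rw [show (fun x : Fin m => -(t * y x)) = fun x : Fin m => t * -y x by funext x; ring]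
    rw [Finset.prod_mul_distrib, Finset.prod_const, card_univ, Fintype.card_fin]
  have hR : ∀ x : Fin m,
      (∏ i : Fin m, (y x - t * y i) - ∏ i : Fin m, (y x - y i)) *
        ∏ j ∈ univ.erase x, (y x - y j)⁻¹ * -y j
      = (t - 1) * Q * ∏ j ∈ univ.erase x, (y x - t * y j) / (y x - y j) := by
    intro x
    rw [show (∏ i : Fin m, (y x - y i)) = 0 from Finset.prod_eq_zero (mem_univ x) (sub_self (y x)), sub_zero,
      ← Finset.mul_prod_erase univ (fun i => y x - t * y i) (mem_univ x), hQdef,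
      ← Finset.mul_prod_erase univ (fun i => -y i) (mem_univ x),
      Finset.prod_mul_distrib, Finset.prod_inv_distrib, Finset.prod_div_distrib]
    ring
  rw [hL, Finset.sum_congr rfl (fun x _ => hR x), ← Finset.mul_sum] at E
  have ht' : t - 1 ≠ 0 := sub_ne_zero.2 ht
  have hgeom : (∑ j ∈ range m, t ^ j) * (t - 1) = t ^ m - 1 := geom_sum_mul t m
  apply mul_left_cancel₀ (mul_ne_zero ht' hQ)
  rw [← E]
  rw [show (t - 1) * Q * ∑ j ∈ range m, t ^ j = Q * ((∑ j ∈ range m, t ^ j) * (t - 1)) by ring,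
    hgeom]
  ring

private lemma mainlem (n : ℕ) (t : K) (ht : t ≠ 1) (y : Fin n → K)
    (hy : Function.Injective y) (hy0 : ∀ i, y i ≠ 0) :
    ∑ w : Equiv.Perm (Fin n), ∏ i, ∏ j ∈ Ioi i,
      ((y (w i) - t * y (w j)) / (y (w i) - y (w j)))
      = ∏ i ∈ range n, ∑ j ∈ range (i + 1), t ^ j := by
  induction n with
  | zero => simp
  | succ n IH =>
    classical
    rw [← Equiv.sum_comp ((Equiv.Perm.decomposeFin (n := n)).symm)
      (fun w : Equiv.Perm (Fin (n+1)) => ∏ i, ∏ j ∈ Ioi i,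
        ((y (w i) - t * y (w j)) / (y (w i) - y (w j)))), Fintype.sum_prod_type]
    set y' : Fin (n+1) → Fin n → K := fun p i => y (Equiv.swap 0 p i.succ) with hy'
    have hy'inj : ∀ p, Function.Injective (y' p) := fun p =>
      hy.comp ((Equiv.swap 0 p).injective.comp (Fin.succ_injective n))
    have hy'0 : ∀ p i, y' p i ≠ 0 := fun p i => hy0 _
    have hterm : ∀ (p : Fin (n+1)) (e : Equiv.Perm (Fin n)),
        (∏ i, ∏ j ∈ Ioi i, ((y (Equiv.Perm.decomposeFin.symm (p, e) i) -
            t * y (Equiv.Perm.decomposeFin.symm (p, e) j)) /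
          (y (Equiv.Perm.decomposeFin.symm (p, e) i) -
            y (Equiv.Perm.decomposeFin.symm (p, e) j))))
        = (∏ j : Fin n, ((y p - t * y' p j) / (y p - y' p j))) *
          ∏ i, ∏ j ∈ Ioi i,
            ((y' p (e i) - t * y' p (e j)) / (y' p (e i) - y' p (e j))) := by
      intro p e
      rw [Fin.prod_univ_succ]
      congr 1
      · rw [Fin.prod_Ioi_zero]
        simp only [Equiv.Perm.decomposeFin_symm_apply_zero,
          Equiv.Perm.decomposeFin_symm_apply_succ, hy']
        exact Equiv.prod_comp e (fun x => (y p - t * y ((Equiv.swap 0 p) x.succ)) / (y p - y ((Equiv.swap 0 p) x.succ)))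
      · refine Finset.prod_congr rfl fun i _ => ?_
        rw [Fin.prod_Ioi_succ]
        refine Finset.prod_congr rfl fun j _ => ?_
        simp only [Equiv.Perm.decomposeFin_symm_apply_succ, hy']
    simp only [hterm]
    rw [Finset.sum_congr rfl fun p _ => by
      rw [← Finset.mul_sum, IH (y' p) (hy'inj p) (hy'0 p)]]
    rw [← Finset.sum_mul, prod_range_succ, mul_comm]
    congr 1
    rw [← keyA (n+1) t ht y hy hy0]
    refine Finset.sum_congr rfl fun p _ => ?_
    have hemb : Function.Injective (fun j : Fin n => Equiv.swap 0 p j.succ) :=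
      (Equiv.swap 0 p).injective.comp (Fin.succ_injective n)
    have himg : univ.map ⟨fun j : Fin n => Equiv.swap 0 p j.succ, hemb⟩ = univ.erase p := by
      apply Finset.eq_of_subset_of_card_le
      · intro x hx
        simp only [Finset.mem_map, Finset.mem_erase, Finset.mem_univ, and_true] at hx ⊢
        obtain ⟨j, -, rfl⟩ := hx
        intro h
        have : j.succ = (0 : Fin (n+1)) := (Equiv.swap 0 p).injective
          (h.trans (Equiv.swap_apply_left 0 p).symm)
        exact Fin.succ_ne_zero j this
      · rw [Finset.card_erase_of_mem (mem_univ p), Finset.card_map, card_univ, card_univ,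
          Fintype.card_fin, Fintype.card_fin]
        omega
    rw [← himg, Finset.prod_map]
    rfl

/-- In the field of rational functions `ℚ(y₁, …, yₙ, t)`, the symmetrization identity
`∑_{w ∈ Sₙ} w(∏_{i<j} (yᵢ - t yⱼ)/(yᵢ - yⱼ)) = vₙ(t)` holds, where
`vₙ(t) = ∏_{i=1}^n (1 + t + ⋯ + t^{i-1})` and `w` acts by permuting the `y`-variables. -/
theorem hall_littlewood_symmetrization (n : ℕ) :
    let F := FractionRing (MvPolynomial (Option (Fin n)) ℚ)
    let y : Fin n → F := fun i => algebraMap (MvPolynomial (Option (Fin n)) ℚ) F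
      (MvPolynomial.X (some i))
    let t : F := algebraMap (MvPolynomial (Option (Fin n)) ℚ) F (MvPolynomial.X none)
    ∑ w : Equiv.Perm (Fin n), ∏ i, ∏ j ∈ Ioi i,
        ((y (w i) - t * y (w j)) / (y (w i) - y (w j)))
      = ∏ i ∈ range n, ∑ j ∈ range (i + 1), t ^ j := by
  intro F y t
  have halg : Function.Injective
      (algebraMap (MvPolynomial (Option (Fin n)) ℚ) F) :=
    IsFractionRing.injective _ _
  have ht : t ≠ 1 := by
    intro h
    have h1 : (MvPolynomial.X none : MvPolynomial (Option (Fin n)) ℚ) = 1 := by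
      apply halg
      rw [map_one]; exact h
    have := congrArg MvPolynomial.constantCoeff h1
    simp at this
  have hy : Function.Injective y := by
    intro i j h
    exact Option.some_injective _ (MvPolynomial.X_injective (halg h))
  have hy0 : ∀ i, y i ≠ 0 := by
    intro i h
    exact MvPolynomial.X_ne_zero (some i) (halg (by rw [map_zero]; exact h))
  exact mainlem n t ht y hy hy0
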